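/- Let f : ℝ → ℝ be continuously differentiable with exactly three zeros a < c < b, with f'(a) = f'(b) = −1. Then f'(c) ≥ 0. -/
import Mathlib


theorem stmt_18 (f : ℝ → ℝ) (a c b : ℝ) (hac : a < c) (hcb : c < b)
    (hdiff : Differentiable ℝ f) (hcont : Continuous (deriv f))
    (hzeros : ∀ x : ℝ, f x = 0 ↔ x = a ∨ x = c ∨ x = b)
    (ha' : deriv f a = -1) (hb' : deriv f b = -1) :
    0 ≤ deriv f c := by
  have hfb : f b = 0 := (hzeros b).mpr (Or.inr (Or.inr rfl))
  have hfc : f c = 0 := (hzeros c).mpr (Or.inr (Or.inl rfl))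
  -- slope at b tends to -1 along left neighborhoods
  have hdb : HasDerivAt f (-1) b := hb' ▸ (hdiff b).hasDerivAt
  have hsb : Filter.Tendsto (slope f b) (nhdsWithin b (Set.Iio b)) (nhds (-1)) :=
    (hasDerivAt_iff_tendsto_slope.mp hdb).mono_left
      (nhdsWithin_mono b (fun x hx => ne_of_lt hx))
  have hev1 : ∀ᶠ x in nhdsWithin b (Set.Iio b), slope f b x < 0 :=
    hsb.eventually (gt_mem_nhds (by norm_num : (-1 : ℝ) < 0))
  have hev2 : ∀ᶠ x in nhdsWithin b (Set.Iio b), x ∈ Set.Ioo c b :=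
    Filter.eventually_of_mem (Ioo_mem_nhdsLT_of_mem ⟨hcb, le_refl b⟩) (fun x hx => hx)
  obtain ⟨y, hy1, hy2⟩ := (hev1.and hev2).exists
  have hyb : y - b < 0 := sub_neg.mpr hy2.2
  have hfy : 0 < f y := by
    have : (f y - f b) / (y - b) < 0 := by
      have := hy1
      rwa [slope_def_field] at this
    rw [hfb, sub_zero] at this
    rcases div_neg_iff.mp this with ⟨h1, h2⟩ | ⟨h1, h2⟩
    · linarith
    · linarith
  -- f > 0 on (c, b)
  have hpos : ∀ x ∈ Set.Ioo c b, 0 < f x := by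
    intro x hx
    rcases lt_trichotomy (f x) 0 with hlt | heq | hgt
    · -- IVT gives a zero between x and y, inside (c,b) : contradiction
      exfalso
      have hsub : Set.uIcc x y ⊆ Set.Ioo c b :=
        Set.ordConnected_Ioo.uIcc_subset hx hy2
      have h0 : (0 : ℝ) ∈ Set.uIcc (f x) (f y) :=
        Set.mem_uIcc.mpr (Or.inl ⟨le_of_lt hlt, le_of_lt hfy⟩)
      obtain ⟨z, hz1, hz2⟩ := intermediate_value_uIcc
        (hdiff.continuous.continuousOn (s := Set.uIcc x y)) h0
      have hz3 := hsub hz1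
      rcases (hzeros z).mp hz2 with h | h | h
      · exact absurd (h ▸ hz3).1 (by simp [not_lt.mpr (le_of_lt hac)])
      · exact lt_irrefl c (h ▸ hz3).1
      · exact lt_irrefl b (h ▸ hz3).2
    · exfalso
      rcases (hzeros x).mp heq with h | h | h
      · exact absurd hx.1 (by rw [h]; exact not_lt.mpr (le_of_lt hac))
      · exact lt_irrefl c (h ▸ hx).1
      · exact lt_irrefl b (h ▸ hx).2
    · exact hgt
  -- slope at c along right neighborhoods is eventually ≥ 0
  have hdc : HasDerivAt f (deriv f c) c := (hdiff c).hasDerivAt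
  have hsc : Filter.Tendsto (slope f c) (nhdsWithin c (Set.Ioi c)) (nhds (deriv f c)) :=
    (hasDerivAt_iff_tendsto_slope.mp hdc).mono_left
      (nhdsWithin_mono c (fun x hx => ne_of_gt hx))
  have hev3 : ∀ᶠ x in nhdsWithin c (Set.Ioi c), 0 ≤ slope f c x := by
    filter_upwards [Filter.eventually_of_mem (Ioo_mem_nhdsGT_of_mem ⟨le_refl c, hcb⟩)
      (fun x hx => hx)] with x hx
    rw [slope_def_field, hfc, sub_zero]
    exact le_of_lt (div_pos (hpos x hx) (sub_pos.mpr hx.1))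
  exact ge_of_tendsto hsc hev3
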